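/- Let I be a finite nonempty index set, ρ₀ > 0, and a : I → ℝ with a(i) ≥ 0 for all i. Let x : ℕ → I → ℝ satisfy x_n(i) ≥ 2ρ₀ for all n and i, and let c : I → ℝ be such that x_n(i) − n·a(i) → c(i) as n → ∞ for every i ∈ I. Then D(x_n, x_{n+1}) → 0 as n → ∞. (Abstract form of the proposition that for a positive Dehn twist g and any X in Teichmüller space, d_h^Γ(gⁿX, g^{n+1}X) → 0 as n → ∞; in particular the action of g on (T_{g,n}, d_h^Γ) is not isometric when d_h^Γ(X, gX) > 0.) -/

import Mathlib

open Filter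

/-- The abstract Hilbert distance between two strictly positive vectors:
`D(u,v) = (1/2)·max_i log(v i/u i) + (1/2)·max_i log(u i/v i)`. -/
noncomputable def Dtil {I : Type*} [Fintype I] [Nonempty I] (u v : I → ℝ) : ℝ :=
  (1 / 2) * (Finset.univ.sup' Finset.univ_nonempty fun i => Real.log (v i / u i)) +
  (1 / 2) * (Finset.univ.sup' Finset.univ_nonempty fun i => Real.log (u i / v i))

/-- Abstract form of the proposition that for a positive Dehn twist `g`,
`d_h^Γ(gⁿX, g^{n+1}X) → 0` as `n → ∞`: if the coordinates `x_n(i) ≥ 2ρ₀` grow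
linearly with slopes `a(i) ≥ 0` and asymptotic intercepts `c(i)`, then
`D(x_n, x_{n+1}) → 0`. -/
theorem stmt18 {I : Type*} [Fintype I] [Nonempty I]
    (ρ₀ : ℝ) (hρ₀ : 0 < ρ₀)
    (a : I → ℝ) (ha : ∀ i, 0 ≤ a i)
    (x : ℕ → I → ℝ) (hx : ∀ n i, 2 * ρ₀ ≤ x n i)
    (c : I → ℝ)
    (hc : ∀ i, Tendsto (fun n : ℕ => x n i - n * a i) atTop (nhds (c i))) :
    Tendsto (fun n : ℕ => Dtil (x n) (x (n + 1))) atTop (nhds 0) := by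
  have hxpos : ∀ n i, 0 < x n i := fun n i => lt_of_lt_of_le (by linarith) (hx n i)
  -- Each log-ratio tends to 0.
  have key : ∀ i, Tendsto (fun n : ℕ => Real.log (x (n + 1) i / x n i)) atTop (nhds 0) := by
    intro i
    have hratio : Tendsto (fun n : ℕ => x (n + 1) i / x n i) atTop (nhds 1) := by
      have hdiv : Tendsto (fun n : ℕ => (x (n + 1) i - x n i) / x n i) atTop (nhds 0) := by
        have hnum : Tendsto (fun n : ℕ => x (n + 1) i - x n i) atTop (nhds (a i)) := by
          have h1 : Tendsto (fun n : ℕ => x (n + 1) i - (n + 1 : ℕ) * a i) atTop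
              (nhds (c i)) := (hc i).comp (tendsto_add_atTop_nat 1)
          have h3 := (h1.sub (hc i)).add
            (tendsto_const_nhds : Tendsto (fun _ : ℕ => a i) atTop (nhds (a i)))
          have h4 : Tendsto (fun n : ℕ => x (n + 1) i - x n i) atTop
              (nhds (c i - c i + a i)) := by
            refine h3.congr fun n => ?_
            push_cast; ring
          simpa using h4
        rcases eq_or_lt_of_le (ha i) with hzero | hpos
        · -- a i = 0 : numerator → 0, denominator bounded below
          have hnum0 : Tendsto (fun n : ℕ => x (n + 1) i - x n i) atTop (nhds 0) := by
            rw [hzero]; exact hnum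
          refine squeeze_zero_norm
            (a := fun n => |x (n + 1) i - x n i| / (2 * ρ₀)) (fun n => ?_) ?_
          · rw [Real.norm_eq_abs, abs_div, abs_of_pos (hxpos n i)]
            exact div_le_div_of_nonneg_left (abs_nonneg _) (by linarith) (hx n i)
          · have : Tendsto (fun n : ℕ => |x (n + 1) i - x n i|) atTop (nhds 0) := by
              simpa using hnum0.abs
            simpa using this.div_const (2 * ρ₀)
        · -- a i > 0 : denominator → ∞
          have hden : Tendsto (fun n : ℕ => x n i) atTop atTop := by
            have h2 : Tendsto (fun n : ℕ => (n : ℝ) * a i) atTop atTop :=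
              Tendsto.atTop_mul_const hpos tendsto_natCast_atTop_atTop
            exact ((hc i).add_atTop h2).congr fun n => by ring
          exact hnum.div_atTop hden
      have : Tendsto (fun n : ℕ => (x (n + 1) i - x n i) / x n i + 1) atTop (nhds (0 + 1)) :=
        hdiv.add tendsto_const_nhds
      rw [zero_add] at this
      refine this.congr fun n => ?_
      have h0 : x n i ≠ 0 := (hxpos n i).ne'
      field_simp
      ring
    have hlog : Tendsto (fun n : ℕ => Real.log (x (n + 1) i / x n i)) atTop
        (nhds (Real.log 1)) :=
      (Real.continuousAt_log one_ne_zero).tendsto.comp hratio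
    simpa using hlog
  -- Bound |Dtil| by the sum of absolute log-ratios.
  set L : ℕ → I → ℝ := fun n i => Real.log (x (n + 1) i / x n i) with hL
  have hsum : Tendsto (fun n : ℕ => ∑ i : I, |L n i|) atTop (nhds 0) := by
    have : Tendsto (fun n : ℕ => ∑ i : I, |L n i|) atTop (nhds (∑ _i : I, (0 : ℝ))) := by
      apply tendsto_finset_sum
      intro i _
      simpa using (key i).abs
    simpa using this
  apply squeeze_zero_norm _ hsum
  intro n
  rw [Real.norm_eq_abs, abs_le]
  have hub : ∀ i : I, L n i ≤ ∑ j : I, |L n j| := fun i =>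
    le_trans (le_abs_self _) (Finset.single_le_sum (f := fun j => |L n j|)
      (fun j _ => abs_nonneg _) (Finset.mem_univ i))
  have hlb : ∀ i : I, -(∑ j : I, |L n j|) ≤ L n i := fun i => by
    have := Finset.single_le_sum (f := fun j => |L n j|)
      (fun j _ => abs_nonneg _) (Finset.mem_univ i)
    have h2 := neg_abs_le (L n i)
    linarith
  have hflip : ∀ i : I, Real.log (x n i / x (n + 1) i) = -(L n i) := by
    intro i
    simp only [hL]
    rw [Real.log_div (hxpos n i).ne' (hxpos (n + 1) i).ne',
      Real.log_div (hxpos (n + 1) i).ne' (hxpos n i).ne']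
    ring
  obtain ⟨i0⟩ := (inferInstance : Nonempty I)
  constructor
  · -- lower bound
    rw [Dtil]
    have h1 : -(∑ j : I, |L n j|) ≤ Finset.univ.sup' Finset.univ_nonempty
        fun i => Real.log (x (n + 1) i / x n i) :=
      le_trans (hlb i0) (Finset.le_sup' _ (Finset.mem_univ i0))
    have h2 : -(∑ j : I, |L n j|) ≤ Finset.univ.sup' Finset.univ_nonempty
        fun i => Real.log (x n i / x (n + 1) i) := by
      refine le_trans ?_ (Finset.le_sup' _ (Finset.mem_univ i0))
      rw [hflip i0]
      have := hub i0
      linarith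
    linarith
  · -- upper bound
    rw [Dtil]
    have h1 : (Finset.univ.sup' Finset.univ_nonempty
        fun i => Real.log (x (n + 1) i / x n i)) ≤ ∑ j : I, |L n j| :=
      Finset.sup'_le _ _ fun i _ => hub i
    have h2 : (Finset.univ.sup' Finset.univ_nonempty
        fun i => Real.log (x n i / x (n + 1) i)) ≤ ∑ j : I, |L n j| :=
      Finset.sup'_le _ _ fun i _ => by rw [hflip i]; have := hlb i; linarith
    linarith
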